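/- For real z with |z| < 1 and β > 0, the limit as α → 0⁺ of the generalized Mittag-Leffler function E_{α,β}(z) = Σ_{k=0}^∞ z^k / Γ(αk + β) equals 1 / (Γ(β)(1 - z)). -/

import Mathlib

open Real Filter Topology

/-- The generalized Mittag-Leffler function `E_{α,β}(z) = ∑ z^k / Γ(αk + β)`. -/
noncomputable def mittagLeffler (α β z : ℝ) : ℝ :=
  ∑' k : ℕ, z ^ k / Real.Gamma (α * k + β)

/-- For `|z| < 1` and `β > 0`, `E_{α,β}(z) → 1/(Γ(β)(1-z))` as `α → 0⁺`. -/
theorem mittagLeffler_tendsto_alpha_zero (z β : ℝ) (hz : |z| < 1) (hβ : 0 < β) :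
    Tendsto (fun α : ℝ => mittagLeffler α β z) (nhdsWithin 0 (Set.Ioi 0))
      (nhds (1 / (Real.Gamma β * (1 - z)))) := by
  -- A uniform positive lower bound for `Γ` on `[β, ∞)`.
  obtain ⟨x₀, hx₀, hmin⟩ : ∃ x₀ ∈ Set.Icc β (β + 2),
      ∀ x ∈ Set.Icc β (β + 2), Real.Gamma x₀ ≤ Real.Gamma x := by
    have hc : ContinuousOn Real.Gamma (Set.Icc β (β + 2)) := by
      intro x hx
      have hxpos : (0:ℝ) < x := lt_of_lt_of_le hβ hx.1
      exact ((Real.differentiableAt_Gamma (fun m =>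
        ((neg_nonpos.mpr (Nat.cast_nonneg m)).trans_lt hxpos).ne')).continuousAt).continuousWithinAt
    obtain ⟨x₀, hx₀, h⟩ := (isCompact_Icc).exists_isMinOn ⟨β, le_refl _, by linarith⟩ hc
    exact ⟨x₀, hx₀, h⟩
  set M : ℝ := min (Real.Gamma x₀) 1 with hM
  have hMpos : 0 < M := lt_min (Real.Gamma_pos_of_pos (lt_of_lt_of_le hβ hx₀.1)) one_pos
  have hlow : ∀ x : ℝ, β ≤ x → M ≤ Real.Gamma x := by
    intro x hx
    rcases le_or_gt x (β + 2) with h | h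
    · exact le_trans (min_le_left _ _) (hmin x ⟨hx, h⟩)
    · have h2 : (2:ℝ) ≤ x := by linarith
      have : Real.Gamma 2 ≤ Real.Gamma x :=
        Real.Gamma_strictMonoOn_Ici.monotoneOn (by norm_num) h2 h2
      rw [Real.Gamma_two] at this
      exact le_trans (min_le_right _ _) this
  have hΓβ : Real.Gamma β ≠ 0 := (Real.Gamma_pos_of_pos hβ).ne'
  -- Tannery's theorem
  have key : Tendsto (fun α : ℝ => mittagLeffler α β z) (nhdsWithin 0 (Set.Ioi 0))
      (nhds (∑' k : ℕ, z ^ k / Real.Gamma β)) := by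
    apply tendsto_tsum_of_dominated_convergence
      (bound := fun k : ℕ => |z| ^ k / M)
    · exact (summable_geometric_of_lt_one (abs_nonneg z) hz).div_const M
    · intro k
      have hcont : Tendsto (fun α : ℝ => Real.Gamma (α * k + β)) (nhds 0)
          (nhds (Real.Gamma β)) := by
        have h1 : ContinuousAt Real.Gamma β :=
          (Real.differentiableAt_Gamma (fun m =>
            ((neg_nonpos.mpr (Nat.cast_nonneg m)).trans_lt hβ).ne')).continuousAt
        have h2 : Tendsto (fun α : ℝ => α * k + β) (nhds 0) (nhds β) := by
          have : Tendsto (fun α : ℝ => α * k + β) (nhds 0) (nhds (0 * k + β)) :=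
            ((continuous_id.mul continuous_const).add continuous_const).tendsto 0
          simpa using this
        exact h1.tendsto.comp h2
      exact (tendsto_const_nhds.div (hcont.mono_left nhdsWithin_le_nhds) hΓβ)
    · filter_upwards [self_mem_nhdsWithin] with α (hα : 0 < α) k
      have hge : β ≤ α * k + β := by
        have := mul_nonneg hα.le (Nat.cast_nonneg k); linarith
      have hΓpos : 0 < Real.Gamma (α * k + β) :=
        Real.Gamma_pos_of_pos (lt_of_lt_of_le hβ hge)
      rw [Real.norm_eq_abs, abs_div, abs_of_pos hΓpos, abs_pow]
      exact div_le_div_of_nonneg_left (pow_nonneg (abs_nonneg z) k) hMpos (hlow _ hge)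
        |>.trans_eq rfl
  convert key using 2
  rw [tsum_div_const, tsum_geometric_of_abs_lt_one hz]
  field_simp
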